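/- Let R be a commutative ring, G a group, H a subgroup of finite index, and T = {t₁,…,t_{[G:H]}} a complete set of left coset representatives of H in G. For every A ∈ Mat(m, RG) there exists a unique L_T(A) ∈ Mat(m[G:H], RH) such that A·(t₁I_m t₂I_m ⋯ t_{[G:H]}I_m) = (t₁I_m t₂I_m ⋯ t_{[G:H]}I_m)·L_T(A). -/

import Mathlib

open Matrix
open scoped Kronecker

/-- A complex matrix representation is irreducible if its degree is positive and it has
no nontrivial invariant subspaces. -/
def IsIrrep {G : Type*} [Group G] {n : ℕ} (ρ : G →* Matrix (Fin n) (Fin n) ℂ) : Prop :=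
  0 < n ∧ ∀ W : Submodule ℂ (Fin n → ℂ),
    (∀ g : G, ∀ v ∈ W, (ρ g).mulVec v ∈ W) → W = ⊥ ∨ W = ⊤

/-- Equivalence of complex matrix representations. -/
def RepEquiv {G : Type*} [Group G] {n m : ℕ} (ρ : G →* Matrix (Fin n) (Fin n) ℂ)
    (σ : G →* Matrix (Fin m) (Fin m) ℂ) : Prop :=
  ∃ e : (Fin n → ℂ) ≃ₗ[ℂ] (Fin m → ℂ), ∀ g v, e ((ρ g).mulVec v) = (σ g).mulVec (e v)

/-- `ρ` is a complete set of pairwise inequivalent irreducible complex matrix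
representations of `G`. -/
def CompleteIrrepFamily (G : Type*) [Group G] {ι : Type*} (d : ι → ℕ)
    (ρ : ∀ i, G →* Matrix (Fin (d i)) (Fin (d i)) ℂ) : Prop :=
  (∀ i, IsIrrep (ρ i)) ∧
  (∀ i j, i ≠ j → ¬ RepEquiv (ρ i) (ρ j)) ∧
  (∀ (n : ℕ) (σ : G →* Matrix (Fin n) (Fin n) ℂ), IsIrrep σ → ∃ i, RepEquiv σ (ρ i))

/-- The group determinant `Θ(G) = det (x_{g h⁻¹})_{g,h}`. -/
noncomputable def groupDet (G : Type*) [Group G] [Fintype G] [DecidableEq G] :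
    MvPolynomial G ℂ :=
  Matrix.det (Matrix.of fun g h : G => MvPolynomial.X (g * h⁻¹))

section Aux
variable {R : Type*} [CommRing R] {G : Type*} [Group G] {H : Subgroup G}
  {k : ℕ} {t : Fin k → G}

lemma decomp (ht : ∀ g : G, ∃! i : Fin k, (t i)⁻¹ * g ∈ H) (x : MonoidAlgebra R G) :
    ∃! y : Fin k → MonoidAlgebra R H,
      x = ∑ i, MonoidAlgebra.single (t i) (1:R) *
        MonoidAlgebra.mapDomainAlgHom R R H.subtype (y i) := by
  classical
  have hsub : Function.Injective (H.subtype : H → G) := Subtype.val_injective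
  have hterm : ∀ (z : MonoidAlgebra R H) (i : Fin k) (g : G),
      (MonoidAlgebra.single (t i) (1:R) *
        MonoidAlgebra.mapDomainAlgHom R R H.subtype z).coeff g
        = if h : (t i)⁻¹ * g ∈ H then z.coeff ⟨(t i)⁻¹ * g, h⟩ else 0 := by
    intro z i g
    rw [MonoidAlgebra.coeff_single_mul_apply]
    show (1:R) * Finsupp.mapDomain (H.subtype) z.coeff ((t i)⁻¹ * g) = _
    split_ifs with h
    · exact (one_mul _).trans (Finsupp.mapDomain_apply hsub z.coeff ⟨(t i)⁻¹ * g, h⟩)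
    · rw [Finsupp.mapDomain_notin_range, mul_zero]
      rintro ⟨⟨a, ha⟩, rfl⟩; exact h ha
  have hinj : ∀ i : Fin k, Function.Injective (fun h : H => t i * (h : G)) :=
    fun i h1 h2 e => Subtype.ext (mul_left_cancel e)
  refine ⟨fun i => MonoidAlgebra.ofCoeff (Finsupp.comapDomain (fun h : H => t i * (h : G)) x.coeff (hinj i).injOn),
    ?_, ?_⟩
  · ext g
    rw [MonoidAlgebra.coeff_sum, Finsupp.finset_sum_apply]
    obtain ⟨i0, hi0, huniq⟩ := ht g
    rw [Finset.sum_eq_single i0]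
    · rw [hterm, dif_pos hi0, MonoidAlgebra.coeff_ofCoeff, Finsupp.comapDomain_apply]
      congr 1
      simp [mul_assoc]
    · intro j _ hj
      rw [hterm, dif_neg]
      exact fun hmem => hj (huniq j hmem)
    · simp
  · intro y hy
    funext i
    ext h
    have : x.coeff (t i * (h : G)) = (∑ j, MonoidAlgebra.single (t j) (1:R) * MonoidAlgebra.mapDomainAlgHom R R H.subtype (y j)).coeff (t i * (h : G)) := by rw [← hy]
    rw [MonoidAlgebra.coeff_sum, Finsupp.finset_sum_apply] at this
    rw [MonoidAlgebra.coeff_ofCoeff, Finsupp.comapDomain_apply, this, Finset.sum_eq_single i]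
    · rw [hterm, dif_pos (show (t i)⁻¹ * (t i * ↑h) ∈ H by
        rw [inv_mul_cancel_left]; exact h.2)]
      congr 1
      ext
      simp
    · intro j _ hj
      rw [hterm, dif_neg]
      intro hmem
      have h1 : (t i)⁻¹ * (t i * ↑h) ∈ H := by rw [inv_mul_cancel_left]; exact h.2
      obtain ⟨i0, hi0, huniq⟩ := ht (t i * ↑h)
      exact hj ((huniq j hmem).trans (huniq i h1).symm)
    · simp
end Aux

/-- Existence and uniqueness of the left regular representation matrix `L_T(A)`:
`A · (t₁ I_m ⋯ t_k I_m) = (t₁ I_m ⋯ t_k I_m) · L_T(A)`. -/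
theorem leftRegular_exists_unique (R : Type*) [CommRing R] (G : Type*) [Group G]
    (H : Subgroup G) (m k : ℕ) (t : Fin k → G)
    (ht : ∀ g : G, ∃! i : Fin k, (t i)⁻¹ * g ∈ H)
    (A : Matrix (Fin m) (Fin m) (MonoidAlgebra R G)) :
    ∃! B : Matrix (Fin k × Fin m) (Fin k × Fin m) (MonoidAlgebra R H),
      A * (Matrix.of fun (a : Fin m) (p : Fin k × Fin m) =>
          if a = p.2 then MonoidAlgebra.single (t p.1) (1 : R) else 0)
        = (Matrix.of fun (a : Fin m) (p : Fin k × Fin m) =>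
            if a = p.2 then MonoidAlgebra.single (t p.1) (1 : R) else 0)
          * B.map (MonoidAlgebra.mapDomainAlgHom R R H.subtype) := by
  classical
  set T : Matrix (Fin m) (Fin k × Fin m) (MonoidAlgebra R G) :=
    Matrix.of fun (a : Fin m) (p : Fin k × Fin m) =>
      if a = p.2 then MonoidAlgebra.single (t p.1) (1 : R) else 0 with hT
  have hAT : ∀ (a : Fin m) (j : Fin k) (b : Fin m),
      (A * T) a (j, b) = A a b * MonoidAlgebra.single (t j) (1:R) := by
    intro a j b
    simp [hT, Matrix.mul_apply, mul_ite, mul_zero]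
  have hTB : ∀ (B : Matrix (Fin k × Fin m) (Fin k × Fin m) (MonoidAlgebra R H))
      (a : Fin m) (j : Fin k) (b : Fin m),
      (T * B.map (MonoidAlgebra.mapDomainAlgHom R R H.subtype)) a (j, b)
        = ∑ i, MonoidAlgebra.single (t i) (1:R) *
            MonoidAlgebra.mapDomainAlgHom R R H.subtype (B (i, a) (j, b)) := by
    intro B a j b
    simp [hT, Matrix.mul_apply, Fintype.sum_prod_type, ite_mul, zero_mul]
  have key : ∀ (B : Matrix (Fin k × Fin m) (Fin k × Fin m) (MonoidAlgebra R H)),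
      (A * T = T * B.map (MonoidAlgebra.mapDomainAlgHom R R H.subtype)) ↔
      ∀ (a : Fin m) (j : Fin k) (b : Fin m),
        A a b * MonoidAlgebra.single (t j) (1:R)
          = ∑ i, MonoidAlgebra.single (t i) (1:R) *
              MonoidAlgebra.mapDomainAlgHom R R H.subtype (B (i, a) (j, b)) := by
    intro B
    constructor
    · intro hB a j b
      rw [← hAT a j b, ← hTB B a j b, hB]
    · intro hB
      refine Matrix.ext fun a p => ?_
      obtain ⟨j, b⟩ := p
      rw [hAT a j b, hTB B a j b]
      exact hB a j b
  choose y h1 h2 using fun (a : Fin m) (j : Fin k) (b : Fin m) =>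
    decomp ht (A a b * MonoidAlgebra.single (t j) (1:R))
  refine ⟨Matrix.of fun p q => y p.2 q.1 q.2 p.1,
    (key _).mpr fun a j b => h1 a j b, ?_⟩
  intro B' hB'
  rw [key] at hB'
  refine Matrix.ext fun p q => ?_
  obtain ⟨i, a⟩ := p
  obtain ⟨j, b⟩ := q
  have := h2 a j b (fun i => B' (i, a) (j, b)) (hB' a j b)
  exact congrFun this i
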